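/- There is an absolute constant C > 0 such that for every real u ≥ 2, the sum ∑_{2 ≤ n ≤ u} Λ(n)/(√n · log n) ≤ C·√u/log u, where Λ is the von Mangoldt function. -/

import Mathlib

open Finset

lemma theta_le (N : ℕ) :
    ∑ n ∈ Finset.Ioc 0 N, (if n.Prime then Real.log n else 0) ≤ N * Real.log 4 := by
  have h1 : ∑ n ∈ Finset.Ioc 0 N, (if n.Prime then Real.log n else 0)
      = ∑ p ∈ (Finset.range (N+1)).filter Nat.Prime, Real.log p := by
    rw [← Finset.sum_filter]
    apply Finset.sum_congr ?_ (fun _ _ => rfl)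
    ext a
    simp only [Finset.mem_filter, Finset.mem_Ioc, Finset.mem_range, Nat.lt_succ_iff]
    exact ⟨fun ⟨h, hp⟩ => ⟨h.2, hp⟩, fun ⟨h, hp⟩ => ⟨⟨hp.pos, h⟩, hp⟩⟩
  rw [h1]
  have h2 : ∑ p ∈ (Finset.range (N+1)).filter Nat.Prime, Real.log p
      = Real.log (primorial N) := by
    rw [primorial, Nat.cast_prod, Real.log_prod]
    intro x hx
    simp only [Finset.mem_filter] at hx
    exact_mod_cast hx.2.pos.ne'
  rw [h2]
  calc Real.log (primorial N) ≤ Real.log ((4:ℝ)^N) := by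
        apply Real.log_le_log (by exact_mod_cast primorial_pos N)
        exact_mod_cast primorial_le_4_pow N
    _ = N * Real.log 4 := by rw [Real.log_pow]

lemma sqrt_sum_le (M : ℕ) :
    ∑ n ∈ Finset.Icc 1 M, 1 / Real.sqrt n ≤ 2 * Real.sqrt M := by
  induction M with
  | zero => simp
  | succ m ih =>
    rw [Finset.sum_Icc_succ_top (by omega)]
    have ha : Real.sqrt m ^ 2 = m := Real.sq_sqrt (by positivity)
    have hb : Real.sqrt (m+1) ^ 2 = (m+1) := by
      rw [Real.sq_sqrt] <;> push_cast <;> positivity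
    have ha0 : 0 ≤ Real.sqrt m := Real.sqrt_nonneg _
    have hb0 : (0:ℝ) < Real.sqrt (m+1) := Real.sqrt_pos.2 (by positivity)
    have key : 1 / Real.sqrt ((m:ℕ)+1 : ℕ) ≤ 2 * Real.sqrt ((m:ℕ)+1:ℕ) - 2 * Real.sqrt m := by
      push_cast
      rw [div_le_iff₀ hb0]
      nlinarith [sq_nonneg (Real.sqrt (m+1) - Real.sqrt m)]
    push_cast at key ⊢
    linarith

lemma harm_sum_le (M : ℕ) :
    ∑ n ∈ Finset.Icc 2 M, (1 / (n:ℝ)) ≤ Real.log M := by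
  induction M with
  | zero => simp
  | succ m ih =>
    rcases Nat.lt_or_ge m 1 with hm | hm
    · interval_cases m <;> simp
    · rw [Finset.sum_Icc_succ_top (by omega)]
      have h1 : (0:ℝ) < m := by exact_mod_cast hm
      have key : 1 / ((m:ℝ)+1) ≤ Real.log (m+1) - Real.log m := by
        have := Real.log_le_sub_one_of_pos (x := (m:ℝ)/(m+1)) (by positivity)
        rw [Real.log_div (by positivity) (by positivity)] at this
        have : (m:ℝ)/(m+1) - 1 = -(1/(m+1)) := by field_simp; ring
        nlinarith [Real.log_le_sub_one_of_pos (x := (m:ℝ)/(m+1)) (by positivity),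
          Real.log_div (ne_of_gt h1) (by positivity : ((m:ℝ)+1) ≠ 0) ]
      push_cast
      push_cast at ih
      linarith


lemma T_le (N : ℕ) :
    ∑ n ∈ Finset.Ioc 0 N, (if n.Prime then Real.log n / Real.sqrt n else 0)
      ≤ 10 * Real.sqrt N := by
  induction N using Nat.strong_induction_on with
  | _ N ih =>
    rcases Nat.lt_or_ge N 2 with hN | hN
    · interval_cases N <;> simp [Nat.not_prime_one] <;> positivity
    · set M := N / 2 with hM
      have hMN : M < N := by omega
      have hM1 : 1 ≤ M := by omega
      rw [← Finset.sum_Ioc_consecutive _ (Nat.zero_le M) (le_of_lt hMN)]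
      have hMpos : (0:ℝ) < Real.sqrt (M+1) := Real.sqrt_pos.2 (by positivity)
      have h2 : ∑ n ∈ Finset.Ioc M N, (if n.Prime then Real.log n / Real.sqrt n else 0)
          ≤ (1 / Real.sqrt (M+1)) * ∑ n ∈ Finset.Ioc M N, (if n.Prime then Real.log n else 0) := by
        rw [Finset.mul_sum]
        apply Finset.sum_le_sum
        intro n hn
        simp only [Finset.mem_Ioc] at hn
        by_cases hp : n.Prime
        · simp only [if_pos hp]
          have hn0 : (0:ℝ) < Real.sqrt n := Real.sqrt_pos.2 (by exact_mod_cast hp.pos)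
          rw [one_div, inv_mul_eq_div, div_le_div_iff₀ hn0 hMpos]
          have hlog : 0 ≤ Real.log n := Real.log_nonneg (by exact_mod_cast hp.one_lt.le)
          have : Real.sqrt (M+1) ≤ Real.sqrt n := by
            apply Real.sqrt_le_sqrt; exact_mod_cast hn.1
          nlinarith
        · simp [hp]
      have h3 : ∑ n ∈ Finset.Ioc M N, (if n.Prime then Real.log n else 0)
          ≤ N * Real.log 4 := by
        refine le_trans ?_ (theta_le N)
        apply Finset.sum_le_sum_of_subset_of_nonneg
        · exact Finset.Ioc_subset_Ioc (by omega) le_rfl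
        · intro i _ _
          by_cases hp : i.Prime
          · simp only [if_pos hp]; exact Real.log_nonneg (by exact_mod_cast hp.one_lt.le)
          · simp [hp]
      -- numeric part
      set s := Real.sqrt N with hs
      set a := Real.sqrt M with hadef
      set b := Real.sqrt (M+1) with hbdef
      have hs0 : 0 ≤ s := Real.sqrt_nonneg _
      have ha0 : 0 ≤ a := Real.sqrt_nonneg _
      have hsq2 : Real.sqrt 2 ^ 2 = 2 := Real.sq_sqrt (by norm_num)
      have hsqrt2_le : Real.sqrt 2 ≤ 1.415 := by
        rw [show (1.415:ℝ) = Real.sqrt (1.415^2) from (Real.sqrt_sq (by norm_num)).symm]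
        apply Real.sqrt_le_sqrt; norm_num
      have hsqrt2_nonneg : 0 ≤ Real.sqrt 2 := Real.sqrt_nonneg _
      have hL4 : Real.log 4 = 2 * Real.log 2 := by
        rw [show (4:ℝ) = 2^2 by norm_num, Real.log_pow]; push_cast; ring
      have hL4le : Real.log 4 ≤ 1.3863 := by
        rw [hL4]; nlinarith [Real.log_two_lt_d9]
      have hL40 : 0 ≤ Real.log 4 := by
        rw [hL4]; nlinarith [Real.log_pos one_lt_two]
      have h2as : Real.sqrt 2 * a ≤ s := by
        rw [hadef, hs, ← Real.sqrt_mul (by norm_num)]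
        apply Real.sqrt_le_sqrt
        push_cast; have : 2 * M ≤ N := by omega
        exact_mod_cast this
      have hs2b : s ≤ Real.sqrt 2 * b := by
        rw [hbdef, hs, ← Real.sqrt_mul (by norm_num)]
        apply Real.sqrt_le_sqrt
        push_cast; have : N ≤ 2 * (M + 1) := by omega
        exact_mod_cast this
      have hNs : (N:ℝ) = s^2 := (Real.sq_sqrt (by positivity)).symm
      have hterm : 1/b * ((N:ℝ) * Real.log 4) ≤ Real.sqrt 2 * Real.log 4 * s := by
        rw [one_div, inv_mul_eq_div, div_le_iff₀ hMpos, hNs]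
        nlinarith [mul_le_mul_of_nonneg_right (mul_le_mul_of_nonneg_right hs2b hs0) hL40]
      have key : 10 * a + 1/b * ((N:ℝ) * Real.log 4) ≤ 10 * s := by
        have h10a : 10 * a ≤ 5 * Real.sqrt 2 * s := by
          nlinarith [mul_le_mul_of_nonneg_left h2as (by positivity : (0:ℝ) ≤ 5 * Real.sqrt 2)]
        have : Real.sqrt 2 * Real.log 4 * s ≤ 1.415 * 1.3863 * s := by
          apply mul_le_mul_of_nonneg_right _ hs0
          nlinarith
        nlinarith
      calc _ ≤ 10 * a + (1 / b) * ((N:ℝ) * Real.log 4) := by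
            have := ih M hMN
            have h4 : (0:ℝ) ≤ 1 / b := by positivity
            nlinarith [mul_le_mul_of_nonneg_left h3 h4]
        _ ≤ 10 * s := key

open ArithmeticFunction


set_option maxHeartbeats 2000000 in
theorem stmt6 :
    ∃ C : ℝ, 0 < C ∧ ∀ u : ℝ, 2 ≤ u →
      ∑ n ∈ Finset.Icc 2 ⌊u⌋₊, Λ n / (Real.sqrt n * Real.log n)
        ≤ C * Real.sqrt u / Real.log u := by
  refine ⟨300, by norm_num, fun u hu => ?_⟩
  set N := ⌊u⌋₊ with hNdef
  have hu0 : (0:ℝ) < u := by linarith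
  have hu1 : (1:ℝ) < u := by linarith
  set L := Real.log u with hLdef
  have hL : 0 < L := Real.log_pos hu1
  set M := ⌊Real.sqrt u⌋₊ with hMdef
  have hN2 : 2 ≤ N := Nat.le_floor (by exact_mod_cast hu)
  have hsu0 : (0:ℝ) < Real.sqrt u := Real.sqrt_pos.2 hu0
  have hsu1 : (1:ℝ) ≤ Real.sqrt u := Real.one_le_sqrt.2 hu1.le
  have hM1 : 1 ≤ M := Nat.le_floor (by exact_mod_cast hsu1)
  have hsuu : Real.sqrt u ≤ u := by
    calc Real.sqrt u ≤ Real.sqrt (u^2) := Real.sqrt_le_sqrt (by nlinarith)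
      _ = u := Real.sqrt_sq hu0.le
  have hMN : M ≤ N := Nat.floor_le_floor hsuu
  have hNu : (N:ℝ) ≤ u := Nat.floor_le hu0.le
  have hMu : (M:ℝ) ≤ Real.sqrt u := Nat.floor_le (by positivity)
  have hMu1 : Real.sqrt u < (M:ℝ) + 1 := Nat.lt_floor_add_one (Real.sqrt u)
  have hlogsqrt : Real.log (Real.sqrt u) = L / 2 := by
    rw [Real.log_sqrt hu0.le]
  -- Split the sum at M
  have hIcc : Finset.Icc 2 N = Finset.Ioc 1 N := by
    ext a; simp [Nat.lt_iff_add_one_le]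
  rw [hIcc, ← Finset.sum_Ioc_consecutive _ (show 1 ≤ M by omega) hMN]
  -- Part 1 : small range
  have part1 : ∑ n ∈ Finset.Ioc 1 M, Λ n / (Real.sqrt n * Real.log n)
      ≤ 2 * Real.sqrt M := by
    calc ∑ n ∈ Finset.Ioc 1 M, Λ n / (Real.sqrt n * Real.log n)
        ≤ ∑ n ∈ Finset.Ioc 1 M, 1 / Real.sqrt n := by
          apply Finset.sum_le_sum
          intro n hn
          simp only [Finset.mem_Ioc] at hn
          have hn1 : (1:ℝ) < n := by exact_mod_cast hn.1
          have hlogn : 0 < Real.log n := Real.log_pos hn1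
          have hsn : 0 < Real.sqrt n := Real.sqrt_pos.2 (by linarith)
          rw [div_le_div_iff₀ (by positivity) hsn]
          have := vonMangoldt_le_log (n := n)
          nlinarith [vonMangoldt_nonneg (n := n)]
      _ ≤ ∑ n ∈ Finset.Icc 1 M, 1 / Real.sqrt n := by
          apply Finset.sum_le_sum_of_subset_of_nonneg
          · intro a ha; simp only [Finset.mem_Ioc, Finset.mem_Icc] at *; omega
          · intro i _ _; positivity
      _ ≤ 2 * Real.sqrt M := sqrt_sum_le M
  -- Pointwise bound on the large range
  have pw : ∀ n ∈ Finset.Ioc M N, Λ n / (Real.sqrt n * Real.log n)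
      ≤ (if n.Prime then 2 / L * (Real.log n / Real.sqrt n) else 0)
        + (if IsPrimePow n ∧ ¬ n.Prime then 1 / (2 * (n.minFac : ℝ)) else 0) := by
    intro n hn
    simp only [Finset.mem_Ioc] at hn
    have hn2 : 2 ≤ n := by omega
    have hnR : Real.sqrt u < (n:ℝ) := lt_of_lt_of_le hMu1 (by exact_mod_cast hn.1)
    have hlognL : L / 2 ≤ Real.log n := by
      rw [← hlogsqrt]; exact Real.log_le_log hsu0 hnR.le
    have hlogn0 : 0 < Real.log n := lt_of_lt_of_le (by linarith) hlognL
    have hsn : 0 < Real.sqrt n := Real.sqrt_pos.2 (by positivity)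
    by_cases hp : n.Prime
    · rw [if_pos hp, if_neg (fun h => h.2 hp), add_zero, vonMangoldt_apply_prime hp]
      have h1 : Real.log n / (Real.sqrt n * Real.log n) = 1 / Real.sqrt n := by
        rw [mul_comm]; field_simp
      rw [h1, div_mul_div_comm, div_le_div_iff₀ hsn (by positivity)]
      nlinarith
    · simp only [if_neg hp, zero_add]
      by_cases hpp : IsPrimePow n
      · simp only [if_pos (And.intro hpp hp)]
        set p := n.minFac with hpdef
        set k := n.factorization n.minFac with hkdef
        have hppow : p ^ k = n := hpp.minFac_pow_factorization_eq
        have hprime : p.Prime := Nat.minFac_prime (by omega)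
        have hk0 : k ≠ 0 := Nat.factorization_minFac_ne_zero hpp.one_lt
        have hk2 : 2 ≤ k := by
          rcases Nat.lt_or_ge k 2 with h | h
          · interval_cases k
            · omega
            · exfalso; apply hp; rw [← hppow, pow_one]; exact hprime
          · exact h
        have hpn : (p:ℝ) ≤ Real.sqrt n := by
          rw [Real.le_sqrt (Nat.cast_nonneg p) (Nat.cast_nonneg n)]
          have : p ^ 2 ≤ n := by
            calc p ^ 2 ≤ p ^ k := Nat.pow_le_pow_right hprime.pos hk2
              _ = n := hppow
          exact_mod_cast this
        have hΛ : Λ n = Real.log p := by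
          rw [vonMangoldt_apply, if_pos hpp]
        have hlogeq : Real.log n = k * Real.log p := by
          rw [← hppow, ← Real.log_pow]; norm_num
        rw [hΛ, hlogeq]
        have hlogp : 0 < Real.log p := Real.log_pos (by exact_mod_cast hprime.one_lt)
        have hp0 : (0:ℝ) < p := by exact_mod_cast hprime.pos
        rw [div_le_div_iff₀ (by positivity) (by positivity)]
        have hkR : (2:ℝ) ≤ k := by exact_mod_cast hk2
        nlinarith [mul_le_mul_of_nonneg_left (mul_le_mul hkR hpn (by positivity) (by positivity)) hlogp.le]
      · simp [vonMangoldt_eq_zero_iff.2 hpp, hpp]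
  -- Part 2a : primes on the large range
  set w1 : ℕ → ℝ := fun n => if n.Prime then Real.log n / Real.sqrt n else 0 with hw1
  have w1nonneg : ∀ n : ℕ, 0 ≤ w1 n := by
    intro n
    simp only [hw1]
    by_cases hp : n.Prime
    · simp only [if_pos hp]
      have : (1:ℝ) ≤ n := by exact_mod_cast hp.one_lt.le
      positivity
    · simp [hp]
  have part2a : ∑ n ∈ Finset.Ioc M N, (if n.Prime then 2 / L * (Real.log n / Real.sqrt n) else 0)
      ≤ 2 / L * (10 * Real.sqrt N) := by
    have e1 : ∀ n ∈ Finset.Ioc M N, (if n.Prime then 2 / L * (Real.log n / Real.sqrt n) else 0)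
        = 2 / L * w1 n := by
      intro n _
      simp only [hw1]
      split_ifs <;> simp
    rw [Finset.sum_congr rfl e1, ← Finset.mul_sum]
    apply mul_le_mul_of_nonneg_left _ (by positivity)
    calc ∑ n ∈ Finset.Ioc M N, w1 n ≤ ∑ n ∈ Finset.Ioc 0 N, w1 n := by
          apply Finset.sum_le_sum_of_subset_of_nonneg
          · exact Finset.Ioc_subset_Ioc (by omega) le_rfl
          · intro i _ _; exact w1nonneg i
      _ ≤ 10 * Real.sqrt N := T_le N
  -- Part 2b : higher prime powers
  set K := Nat.log 2 N with hK
  have part2b : ∑ n ∈ Finset.Ioc M N, (if IsPrimePow n ∧ ¬ n.Prime then 1 / (2 * (n.minFac:ℝ)) else 0)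
      ≤ (K:ℝ) * (1/2) * Real.log M := by
    have step1 : ∑ n ∈ Finset.Ioc M N, (if IsPrimePow n ∧ ¬ n.Prime then 1 / (2 * (n.minFac:ℝ)) else 0)
        ≤ ∑ n ∈ Finset.Ioc 0 N, (if IsPrimePow n ∧ ¬ n.Prime then 1 / (2 * (n.minFac:ℝ)) else 0) := by
      apply Finset.sum_le_sum_of_subset_of_nonneg
      · exact Finset.Ioc_subset_Ioc (by omega) le_rfl
      · intro i _ _
        split_ifs with h
        · have := Nat.minFac_pos i; positivity
        · exact le_refl 0
    refine step1.trans ?_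
    rw [← Finset.sum_filter]
    set A := (Finset.Ioc 0 N).filter (fun n => IsPrimePow n ∧ ¬ n.Prime) with hA
    have hfacts : ∀ n ∈ A, n.minFac.Prime ∧ 2 ≤ n.factorization n.minFac ∧
        n.minFac ^ n.factorization n.minFac = n ∧ n.minFac ∈ Finset.Icc 2 M ∧
        n.factorization n.minFac ∈ Finset.Icc 2 K := by
      intro n hn
      simp only [hA, Finset.mem_filter, Finset.mem_Ioc] at hn
      obtain ⟨⟨hn0, hnN⟩, hpp, hnp⟩ := hn
      have hn1 : n ≠ 1 := by rintro rfl; exact (not_isPrimePow_one hpp)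
      have hprime : n.minFac.Prime := Nat.minFac_prime hn1
      have hppow : n.minFac ^ n.factorization n.minFac = n := hpp.minFac_pow_factorization_eq
      have hk0 : n.factorization n.minFac ≠ 0 := Nat.factorization_minFac_ne_zero hpp.one_lt
      have hk2 : 2 ≤ n.factorization n.minFac := by
        by_contra hcon
        push_neg at hcon
        have hk1 : n.factorization n.minFac = 1 := by omega
        rw [hk1, pow_one] at hppow
        exact hnp (hppow ▸ hprime)
      refine ⟨hprime, hk2, hppow, ?_, ?_⟩
      · rw [Finset.mem_Icc]
        refine ⟨hprime.two_le, ?_⟩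
        rw [hMdef]
        apply Nat.le_floor
        rw [Real.le_sqrt (Nat.cast_nonneg _) hu0.le]
        have h2 : n.minFac ^ 2 ≤ n := by
          calc n.minFac ^ 2 ≤ n.minFac ^ n.factorization n.minFac :=
                Nat.pow_le_pow_right hprime.pos hk2
            _ = n := hppow
        have : ((n.minFac:ℝ))^2 ≤ (n:ℝ) := by exact_mod_cast h2
        calc ((n.minFac:ℝ))^2 ≤ (n:ℝ) := this
          _ ≤ (N:ℝ) := by exact_mod_cast hnN
          _ ≤ u := hNu
      · rw [Finset.mem_Icc]
        refine ⟨hk2, ?_⟩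
        rw [hK]
        apply (Nat.le_log_iff_pow_le (by norm_num) (by omega)).2
        calc 2 ^ n.factorization n.minFac ≤ n.minFac ^ n.factorization n.minFac :=
              Nat.pow_le_pow_left hprime.two_le _
          _ = n := hppow
          _ ≤ N := hnN
    have hinj : ∀ x ∈ A, ∀ y ∈ A,
        (x.minFac, x.factorization x.minFac) = (y.minFac, y.factorization y.minFac) → x = y := by
      intro x hx y hy hxy
      obtain ⟨_, _, hx3, _, _⟩ := hfacts x hx
      obtain ⟨_, _, hy3, _, _⟩ := hfacts y hy
      rw [Prod.mk.injEq] at hxy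
      calc x = x.minFac ^ (x.factorization x.minFac) := hx3.symm
        _ = y.minFac ^ (y.factorization y.minFac) := by rw [hxy.2, hxy.1]
        _ = y := hy3
    calc ∑ n ∈ A, 1 / (2 * (n.minFac:ℝ))
        = ∑ y ∈ A.image (fun n : ℕ => ((n.minFac, n.factorization n.minFac) : ℕ × ℕ)),
            1 / (2 * ((y.1 : ℕ):ℝ)) := by
          exact (Finset.sum_image (f := fun y : ℕ × ℕ => 1 / (2 * (y.1:ℝ))) hinj).symm
      _ ≤ ∑ y ∈ Finset.Icc 2 M ×ˢ Finset.Icc 2 K, 1 / (2 * (y.1:ℝ)) := by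
          apply Finset.sum_le_sum_of_subset_of_nonneg
          · rw [Finset.image_subset_iff]
            intro n hn
            obtain ⟨_, _, _, h4, h5⟩ := hfacts n hn
            exact Finset.mk_mem_product h4 h5
          · intro i hi _
            simp only [Finset.mem_product, Finset.mem_Icc] at hi
            have : (0:ℝ) < i.1 := by exact_mod_cast (by omega : 0 < i.1)
            positivity
      _ = ∑ p ∈ Finset.Icc 2 M, ((Finset.Icc 2 K).card : ℝ) * (1 / (2 * (p:ℝ))) := by
          rw [Finset.sum_product]
          apply Finset.sum_congr rfl
          intro p _
          simp [Finset.sum_const, nsmul_eq_mul]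
      _ ≤ ∑ p ∈ Finset.Icc 2 M, (K:ℝ) * (1 / (2 * (p:ℝ))) := by
          apply Finset.sum_le_sum
          intro p hp
          simp only [Finset.mem_Icc] at hp
          have hp0 : (0:ℝ) < p := by exact_mod_cast (by omega : 0 < p)
          apply mul_le_mul_of_nonneg_right _ (by positivity)
          have : (Finset.Icc 2 K).card ≤ K := by
            rw [Nat.card_Icc]; omega
          exact_mod_cast this
      _ = (K:ℝ) * (1/2) * ∑ p ∈ Finset.Icc 2 M, (1 / (p:ℝ)) := by
          rw [Finset.mul_sum]
          apply Finset.sum_congr rfl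
          intro p hp
          simp only [Finset.mem_Icc] at hp
          have hp0 : (p:ℝ) ≠ 0 := by
            have : (0:ℝ) < p := by exact_mod_cast (by omega : 0 < p)
            exact this.ne'
          field_simp
      _ ≤ (K:ℝ) * (1/2) * Real.log M := by
          apply mul_le_mul_of_nonneg_left (harm_sum_le M) (by positivity)
  -- combine part 2
  have part2 : ∑ n ∈ Finset.Ioc M N, Λ n / (Real.sqrt n * Real.log n)
      ≤ 2 / L * (10 * Real.sqrt N) + (K:ℝ) * (1/2) * Real.log M := by
    calc ∑ n ∈ Finset.Ioc M N, Λ n / (Real.sqrt n * Real.log n)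
        ≤ ∑ n ∈ Finset.Ioc M N,
            ((if n.Prime then 2 / L * (Real.log n / Real.sqrt n) else 0)
              + (if IsPrimePow n ∧ ¬ n.Prime then 1 / (2 * (n.minFac : ℝ)) else 0)) :=
          Finset.sum_le_sum pw
      _ = (∑ n ∈ Finset.Ioc M N, (if n.Prime then 2 / L * (Real.log n / Real.sqrt n) else 0))
          + ∑ n ∈ Finset.Ioc M N, (if IsPrimePow n ∧ ¬ n.Prime then 1 / (2 * (n.minFac : ℝ)) else 0) :=
          Finset.sum_add_distrib
      _ ≤ _ := add_le_add part2a part2b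
  -- numeric bounds
  set w := Real.sqrt (Real.sqrt u) with hwdef
  have hw1 : 1 ≤ w := Real.one_le_sqrt.2 hsu1
  have hw0 : 0 < w := by linarith
  have hwsq : w^2 = Real.sqrt u := Real.sq_sqrt (Real.sqrt_nonneg u)
  have hlogw : Real.log w = L / 4 := by
    rw [hwdef, Real.log_sqrt (Real.sqrt_nonneg u), hlogsqrt]; ring
  have hL4w : L ≤ 4 * w := by
    have := Real.log_le_sub_one_of_pos hw0
    rw [hlogw] at this; linarith
  have numA : 2 * Real.sqrt M ≤ 8 * Real.sqrt u / L := by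
    rw [le_div_iff₀ hL]
    have hsM : Real.sqrt M ≤ w := by
      rw [hwdef]; exact Real.sqrt_le_sqrt hMu
    have hsM0 : 0 ≤ Real.sqrt M := Real.sqrt_nonneg _
    have key : Real.sqrt M * L ≤ w * (4*w) := mul_le_mul hsM hL4w hL.le hw0.le
    have e2 : w * (4*w) = 4 * Real.sqrt u := by rw [← hwsq]; ring
    linarith
  have numB : 2 / L * (10 * Real.sqrt N) ≤ 20 * Real.sqrt u / L := by
    have hsN : Real.sqrt N ≤ Real.sqrt u := Real.sqrt_le_sqrt hNu
    have e : 2 / L * (10 * Real.sqrt N) = 20 * Real.sqrt N / L := by ring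
    rw [e, div_le_div_iff₀ hL hL]
    nlinarith [Real.sqrt_nonneg (N:ℝ)]
  have hKL : (K:ℝ) ≤ 2 * L := by
    have h2K : (2:ℕ)^K ≤ N := Nat.pow_log_le_self 2 (by omega)
    have h2KR : (2:ℝ)^K ≤ u := by
      calc (2:ℝ)^K ≤ (N:ℝ) := by exact_mod_cast h2K
        _ ≤ u := hNu
    have hlog2K : (K:ℝ) * Real.log 2 ≤ L := by
      rw [← Real.log_pow]
      exact Real.log_le_log (by positivity) h2KR
    nlinarith [Real.log_two_gt_d9, (Nat.cast_nonneg K : (0:ℝ) ≤ K)]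
  have hlogM : Real.log M ≤ L / 2 := by
    rw [← hlogsqrt]
    apply Real.log_le_log (by exact_mod_cast (by omega : 0 < M)) hMu
  have hlogM0 : 0 ≤ Real.log M := Real.log_nonneg (by exact_mod_cast hM1)
  set v := Real.sqrt w with hvdef
  have hv1 : 1 ≤ v := Real.one_le_sqrt.2 hw1
  have hvsq : v^2 = w := Real.sq_sqrt (by positivity)
  have hlogv : Real.log v = L / 8 := by
    rw [hvdef, Real.log_sqrt (by positivity), hlogw]; ring
  have hL8v : L ≤ 8 * v := by
    have := Real.log_le_sub_one_of_pos (by linarith : (0:ℝ) < v)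
    rw [hlogv] at this; linarith
  have hL3 : L^3 ≤ 512 * Real.sqrt u := by
    have h1 : L^3 ≤ (8*v)^3 := by
      apply pow_le_pow_left₀ hL.le hL8v
    have hv0 : (0:ℝ) ≤ v := by linarith
    have h2 : v^3 ≤ v^4 := by
      calc v^3 = v^3 * 1 := by ring
        _ ≤ v^3 * v := mul_le_mul_of_nonneg_left hv1 (pow_nonneg hv0 3)
        _ = v^4 := by ring
    have h3 : v^4 = Real.sqrt u := by
      rw [show v^4 = (v^2)^2 by ring, hvsq, hwsq]
    nlinarith
  have numC : (K:ℝ) * (1/2) * Real.log M ≤ 256 * Real.sqrt u / L := by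
    rw [le_div_iff₀ hL]
    have hK0 : (0:ℝ) ≤ K := Nat.cast_nonneg K
    have step : (K:ℝ) * (1/2) * Real.log M ≤ (2*L) * (1/2) * (L/2) := by
      apply mul_le_mul (by nlinarith) hlogM hlogM0 (by nlinarith)
    calc (K:ℝ) * (1/2) * Real.log M * L ≤ ((2*L) * (1/2) * (L/2)) * L := by nlinarith
      _ = L^3 / 2 := by ring
      _ ≤ 256 * Real.sqrt u := by nlinarith
  calc ∑ n ∈ Finset.Ioc 1 M, Λ n / (Real.sqrt n * Real.log n)
        + ∑ n ∈ Finset.Ioc M N, Λ n / (Real.sqrt n * Real.log n)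
      ≤ 2 * Real.sqrt M + (2 / L * (10 * Real.sqrt N) + (K:ℝ) * (1/2) * Real.log M) :=
        add_le_add part1 part2
    _ ≤ 8 * Real.sqrt u / L + (20 * Real.sqrt u / L + 256 * Real.sqrt u / L) :=
        add_le_add numA (add_le_add numB numC)
    _ = 284 * Real.sqrt u / L := by ring
    _ ≤ 300 * Real.sqrt u / L := by
        rw [div_le_div_iff₀ hL hL]
        nlinarith [Real.sqrt_nonneg u]
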